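/- Let (Λ, 𝒢_Λ) and (Ξ, 𝒢_Ξ) be labeled-graphs in which every vertex group is a directly-indecomposable cyclic group. Then (Λ, 𝒢_Λ) and (Ξ, 𝒢_Ξ) are isomorphic as labeled-graphs if and only if their T₀-quotients (Λ₀, 𝒢_{Λ₀}) and (Ξ₀, 𝒢_{Ξ₀}) are isomorphic as labeled-graphs. -/

import Mathlib

open Monoid

open scoped commutatorElement

section GraphProduct

variable {V : Type} (Γ : SimpleGraph V) (G : V → Type) [∀ v, Group (G v)]

/-- The relations of the graph product: the normal closure of the commutators
`[g, h]` with `g ∈ G u`, `h ∈ G v` and `u, v` adjacent. -/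
def gpRel : Subgroup (CoprodI G) :=
  Subgroup.normalClosure
    {x | ∃ (u v : V) (g : G u) (h : G v), Γ.Adj u v ∧ x = ⁅CoprodI.of g, CoprodI.of h⁆}

instance : (gpRel Γ G).Normal := Subgroup.normalClosure_normal

/-- The graph product of the family of groups `G` over the graph `Γ`. -/
def GP := CoprodI G ⧸ gpRel Γ G

instance : Group (GP Γ G) := QuotientGroup.Quotient.group _

/-- The canonical map from a vertex group into the graph product. -/
def GP.of (v : V) : G v →* GP Γ G := (QuotientGroup.mk' (gpRel Γ G)).comp CoprodI.of

/-- The subgroup `W(U)` of the graph product generated by the images of the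
vertex groups `G u`, `u ∈ U`. -/
def WS (U : Set V) : Subgroup (GP Γ G) := ⨆ u ∈ U, (GP.of Γ G u).range

/-- The support of an element: the smallest vertex set `S` with `g ∈ W(S)`. -/
def supp (g : GP Γ G) : Set V := ⋂₀ {S : Set V | g ∈ WS Γ G S}

/-- The cyclic support of an element. -/
def supc (g : GP Γ G) : Set V := {u | ∀ w : GP Γ G, u ∈ supp Γ G (w * g * w⁻¹)}

end GraphProduct

/-- A group is directly-indecomposable cyclic if it is infinite cyclic or
cyclic of prime-power order. -/
def DICyclic (G : Type) [Group G] : Prop :=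
  IsCyclic G ∧ (Infinite G ∨ ∃ p n : ℕ, p.Prime ∧ Nat.card G = p ^ n)

/-- Word length with respect to a set `S` of generators. -/
noncomputable def wordLength {G : Type} [Group G] (S : Set G) (g : G) : ℕ :=
  sInf {n | ∃ l : List G, (∀ a ∈ l, a ∈ S) ∧ l.length = n ∧ l.prod = g}

/-- The equivalence relation: `u ∼ v` iff `u` and `v` lie in exactly the same
maximal cliques. -/
def simSetoid {V : Type} (Λ : SimpleGraph V) : Setoid V :=
  ⟨fun u v => ∀ s : Set V, Maximal Λ.IsClique s → (u ∈ s ↔ v ∈ s),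
   ⟨fun _ _ _ => Iff.rfl, fun h s hs => (h s hs).symm, fun h h' s hs => (h s hs).trans (h' s hs)⟩⟩

/-- The `T₀`-quotient graph. -/
def T0Q {V : Type} (Λ : SimpleGraph V) : SimpleGraph (Quotient (simSetoid Λ)) where
  Adj a b := a ≠ b ∧ ∃ u v : V,
    Quotient.mk (simSetoid Λ) u = a ∧ Quotient.mk (simSetoid Λ) v = b ∧ Λ.Adj u v
  symm := ⟨by rintro a b ⟨hne, u, v, hu, hv, h⟩; exact ⟨hne.symm, v, u, hv, hu, h.symm⟩⟩
  loopless := ⟨by rintro a ⟨hne, -⟩; exact hne rfl⟩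

/-- The vertex group of the `T₀`-quotient at a class `a`: the direct product
of the vertex groups over the class. -/
def classGroup {V : Type} (Λ : SimpleGraph V) (G : V → Type) [∀ v, Group (G v)]
    (a : Quotient (simSetoid Λ)) : Type :=
  ∀ v : {v : V // Quotient.mk (simSetoid Λ) v = a}, G v.1

instance {V : Type} (Λ : SimpleGraph V) (G : V → Type) [∀ v, Group (G v)]
    (a : Quotient (simSetoid Λ)) : Group (classGroup Λ G a) :=
  inferInstanceAs (Group (∀ v : {v : V // Quotient.mk (simSetoid Λ) v = a}, G v.1))

/-- A labeled-graph isomorphism: an adjacency-preserving bijection of the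
vertex sets with isomorphic corresponding vertex groups. -/
def IsLabIso {V W : Type} (Γ : SimpleGraph V) (Δ : SimpleGraph W)
    (G : V → Type) (H : W → Type) [∀ v, Group (G v)] [∀ w, Group (H w)] : Prop :=
  ∃ f : V ≃ W, (∀ u v : V, Γ.Adj u v ↔ Δ.Adj (f u) (f v)) ∧
    ∀ u : V, Nonempty (G u ≃* H (f u))


/-- The possible cardinalities of nontrivial directly-indecomposable cyclic groups. -/
def OkCard (c : ℕ) : Prop := c = 0 ∨ ∃ p n : ℕ, p.Prime ∧ 1 ≤ n ∧ c = p ^ n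

section Arith

open Finset
open scoped Classical

lemma gcd_pp {p s k : ℕ} (hp : p.Prime) : Nat.gcd (p ^ s) (p ^ k) = p ^ min s k := by
  rcases le_total s k with h | h
  · rw [Nat.gcd_eq_left (pow_dvd_pow p h), min_eq_left h]
  · rw [Nat.gcd_eq_right (pow_dvd_pow p h), min_eq_right h]

lemma tval_eq {p k c : ℕ} (hp : p.Prime) (hc : OkCard c) :
    (if c = 0 then 1 else Nat.gcd c (p ^ k)) = p ^ min k (c.factorization p) := by
  rcases hc with rfl | ⟨r, s, hr, hs, rfl⟩
  · simp
  · have hne : r ^ s ≠ 0 := pow_ne_zero _ hr.pos.ne'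
    rw [if_neg hne]
    rcases eq_or_ne r p with rfl | hrp
    · rw [gcd_pp hr, hr.factorization_pow, Finsupp.single_eq_same, min_comm]
    · have hcop : Nat.Coprime (r ^ s) (p ^ k) :=
        Nat.Coprime.pow s k ((Nat.coprime_primes hr hp).mpr hrp)
      rw [hcop, hr.factorization_pow, Finsupp.single_eq_of_ne' hrp]
      simp

lemma factorization_eq_iff {p n c : ℕ} (hp : p.Prime) (hn : 1 ≤ n) (hc : OkCard c) :
    c.factorization p = n ↔ c = p ^ n := by
  constructor
  · intro h
    rcases hc with rfl | ⟨r, s, hr, hs, rfl⟩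
    · simp at h; omega
    · rw [hr.factorization_pow] at h
      rcases eq_or_ne r p with rfl | hrp
      · rw [Finsupp.single_eq_same] at h; rw [h]
      · rw [Finsupp.single_eq_of_ne' hrp] at h; omega
  · rintro rfl
    rw [hp.factorization_pow, Finsupp.single_eq_same]

lemma gcdq_eq {q c : ℕ} (hq : q.Prime) (hc : OkCard c) :
    Nat.gcd q c = q ^ ((if c = 0 then 1 else 0) + min 1 (c.factorization q)) := by
  rcases hc with rfl | ⟨r, s, hr, hs, rfl⟩
  · simp
  · have hne : r ^ s ≠ 0 := pow_ne_zero _ hr.pos.ne'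
    rw [if_neg hne, hr.factorization_pow]
    rcases eq_or_ne r q with rfl | hrp
    · rw [Finsupp.single_eq_same, min_eq_left hs, zero_add, pow_one,
        Nat.gcd_eq_left (dvd_pow_self r (by omega))]
    · have hcop : Nat.Coprime q (r ^ s) :=
        Nat.Coprime.pow_right s ((Nat.coprime_primes hq hr).mpr (Ne.symm hrp))
      rw [hcop, Finsupp.single_eq_of_ne' hrp]
      simp

variable {ι κ : Type} [Fintype ι] [Fintype κ]

lemma sum_min_succ (e : ι → ℕ) (k : ℕ) :
    ∑ i, min (k + 1) (e i) = ∑ i, min k (e i) + #(univ.filter fun i => k + 1 ≤ e i) := by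
  rw [Finset.card_filter, ← Finset.sum_add_distrib]
  exact Finset.sum_congr rfl fun i _ => by split_ifs <;> omega

lemma card_eq_level (e : ι → ℕ) (n : ℕ) :
    #(univ.filter fun i => n + 1 ≤ e i) =
      #(univ.filter fun i => n + 1 + 1 ≤ e i) + #(univ.filter fun i => e i = n + 1) := by
  rw [Finset.card_filter, Finset.card_filter, Finset.card_filter, ← Finset.sum_add_distrib]
  exact Finset.sum_congr rfl fun i _ => by split_ifs <;> omega

theorem arith_count (c : ι → ℕ) (d : κ → ℕ)
    (hc : ∀ i, OkCard (c i)) (hd : ∀ j, OkCard (d j))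
    (hT : ∀ p k : ℕ, p.Prime → 1 ≤ k →
      ∏ i, (if c i = 0 then 1 else Nat.gcd (c i) (p ^ k)) =
      ∏ j, (if d j = 0 then 1 else Nat.gcd (d j) (p ^ k)))
    (hHom : ∀ q : ℕ, q.Prime →
      ∏ i, Nat.gcd q (c i) = ∏ j, Nat.gcd q (d j))
    (N : ℕ) :
    #(univ.filter fun i => c i = N) = #(univ.filter fun j => d j = N) := by
  -- S equality
  have hS : ∀ p k : ℕ, p.Prime →
      ∑ i, min k ((c i).factorization p) = ∑ j, min k ((d j).factorization p) := by
    intro p k hp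
    rcases Nat.eq_zero_or_pos k with rfl | hk
    · simp
    · have h1 : ∏ i, (if c i = 0 then 1 else Nat.gcd (c i) (p ^ k)) =
          p ^ ∑ i, min k ((c i).factorization p) := by
        rw [← Finset.prod_pow_eq_pow_sum]
        exact Finset.prod_congr rfl fun i _ => tval_eq hp (hc i)
      have h2 : ∏ j, (if d j = 0 then 1 else Nat.gcd (d j) (p ^ k)) =
          p ^ ∑ j, min k ((d j).factorization p) := by
        rw [← Finset.prod_pow_eq_pow_sum]
        exact Finset.prod_congr rfl fun j _ => tval_eq hp (hd j)
      have := hT p k hp hk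
      rw [h1, h2] at this
      exact Nat.pow_right_injective hp.two_le this
  -- level counts equal for k ≥ 1
  have hC : ∀ p k : ℕ, p.Prime →
      #(univ.filter fun i => k + 1 ≤ (c i).factorization p) =
      #(univ.filter fun j => k + 1 ≤ (d j).factorization p) := by
    intro p k hp
    have h1 := sum_min_succ (fun i => (c i).factorization p) k
    have h2 := sum_min_succ (fun j => (d j).factorization p) k
    have e1 := hS p k hp
    have e2 := hS p (k + 1) hp
    omega
  rcases Nat.eq_zero_or_pos N with rfl | hN
  · -- infinite count, via hHom with q = 2
    have h2 : Nat.Prime 2 := Nat.prime_two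
    have h1 : ∏ i, Nat.gcd 2 (c i) =
        2 ^ (#(univ.filter fun i => c i = 0) + ∑ i, min 1 ((c i).factorization 2)) := by
      rw [Finset.card_filter, ← Finset.sum_add_distrib, ← Finset.prod_pow_eq_pow_sum]
      exact Finset.prod_congr rfl fun i _ => by
        rw [gcdq_eq h2 (hc i)]
    have h1' : ∏ j, Nat.gcd 2 (d j) =
        2 ^ (#(univ.filter fun j => d j = 0) + ∑ j, min 1 ((d j).factorization 2)) := by
      rw [Finset.card_filter, ← Finset.sum_add_distrib, ← Finset.prod_pow_eq_pow_sum]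
      exact Finset.prod_congr rfl fun j _ => by
        rw [gcdq_eq h2 (hd j)]
    have := hHom 2 h2
    rw [h1, h1'] at this
    have := Nat.pow_right_injective (le_refl 2) this
    have hS1 := hS 2 1 h2
    omega
  · by_cases hpp : IsPrimePow N
    · obtain ⟨p, n, hp, hn, rfl⟩ := hpp
      rw [← Nat.prime_iff] at hp
      have hn1 : 1 ≤ n := hn
      -- identify filters with factorization counts
      have hfc : (univ.filter fun i => c i = p ^ n) =
          (univ.filter fun i => (c i).factorization p = n) :=
        Finset.filter_congr fun i _ => by
          rw [factorization_eq_iff hp hn1 (hc i)]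
      have hfd : (univ.filter fun j => d j = p ^ n) =
          (univ.filter fun j => (d j).factorization p = n) :=
        Finset.filter_congr fun j _ => by
          rw [factorization_eq_iff hp hn1 (hd j)]
      rw [hfc, hfd]
      obtain ⟨m, rfl⟩ : ∃ m, n = m + 1 := ⟨n - 1, by omega⟩
      have l1 := card_eq_level (fun i => (c i).factorization p) m
      have l2 := card_eq_level (fun j => (d j).factorization p) m
      have c1 := hC p m hp
      have c2 := hC p (m + 1) hp
      omega
    · -- both counts are zero
      have hcc : (univ.filter fun i => c i = N) = ∅ := by
        rw [Finset.filter_eq_empty_iff]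
        intro i _ h
        rcases hc i with h0 | ⟨r, s, hr, hs, hrs⟩
        · omega
        · exact hpp ⟨r, s, hr.prime, hs, (h ▸ hrs).symm⟩
      have hdd : (univ.filter fun j => d j = N) = ∅ := by
        rw [Finset.filter_eq_empty_iff]
        intro j _ h
        rcases hd j with h0 | ⟨r, s, hr, hs, hrs⟩
        · omega
        · exact hpp ⟨r, s, hr.prime, hs, (h ▸ hrs).symm⟩
      simp [hcc, hdd]


end Arith


section ZModCount

lemma zmod_count (m n : ℕ) (hm : m ≠ 0) :
    Nat.card {x : ZMod m // n • x = 0} = Nat.gcd m n := by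
  haveI : NeZero m := ⟨hm⟩
  set φ : ZMod m →+ ZMod m := AddMonoidHom.mk' (fun x => n • x) (fun a b => smul_add n a b) with hφ
  have hrange : φ.range = AddSubgroup.zmultiples ((n : ZMod m)) := by
    ext x
    constructor
    · rintro ⟨y, rfl⟩
      obtain ⟨k, rfl⟩ := ZMod.intCast_surjective (n := m) y
      refine AddSubgroup.mem_zmultiples_iff.mpr ⟨k, ?_⟩
      show k • (n : ZMod m) = n • ((k : ℤ) : ZMod m)
      rw [zsmul_eq_mul, nsmul_eq_mul, mul_comm]
    · intro hx
      obtain ⟨k, rfl⟩ := AddSubgroup.mem_zmultiples_iff.mp hx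
      refine ⟨((k : ℤ) : ZMod m), ?_⟩
      show n • ((k : ℤ) : ZMod m) = k • (n : ZMod m)
      rw [zsmul_eq_mul, nsmul_eq_mul, mul_comm]
  have hcard := AddSubgroup.card_eq_card_quotient_mul_card_addSubgroup φ.ker
  have hquot : Nat.card (ZMod m ⧸ φ.ker) = Nat.card φ.range :=
    Nat.card_congr (QuotientAddGroup.quotientKerEquivRange φ).toEquiv
  have hrangecard : Nat.card φ.range = m / m.gcd n := by
    rw [hrange, Nat.card_zmultiples, ZMod.addOrderOf_coe n hm]
  have hzm : Nat.card (ZMod m) = m := Nat.card_zmod m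
  have hker : Nat.card {x : ZMod m // n • x = 0} = Nat.card φ.ker :=
    Nat.card_congr (Equiv.subtypeEquivRight fun x => Iff.rfl)
  have hg : m.gcd n ∣ m := Nat.gcd_dvd_left m n
  have hgpos : 0 < m.gcd n := Nat.gcd_pos_of_pos_left n (Nat.pos_of_ne_zero hm)
  have hdiv : m / m.gcd n * m.gcd n = m := Nat.div_mul_cancel hg
  have hdpos : 0 < m / m.gcd n := by
    rcases Nat.eq_zero_or_pos (m / m.gcd n) with h | h
    · rw [h, zero_mul] at hdiv; omega
    · exact h
  rw [hzm, hquot, hrangecard] at hcard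
  rw [hker]
  have : m / m.gcd n * Nat.card φ.ker = m / m.gcd n * m.gcd n := by rw [hdiv, ← hcard]
  exact Nat.eq_of_mul_eq_mul_left hdpos this

lemma int_count {n : ℕ} (hn : n ≠ 0) : Nat.card {x : ℤ // n • x = 0} = 1 := by
  haveI : Unique {x : ℤ // n • x = 0} :=
    { default := ⟨0, smul_zero n⟩
      uniq := by
        rintro ⟨x, hx⟩
        ext
        rw [nsmul_eq_mul] at hx
        have := mul_eq_zero.mp hx
        simp only [Int.natCast_eq_zero] at this
        simpa using this.resolve_left hn }
  exact Nat.card_unique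

end ZModCount

section TorsionCount

lemma Tcard_congr {P Q : Type} [Group P] [Group Q] (e : P ≃* Q) (n : ℕ) :
    Nat.card {x : P // x ^ n = 1} = Nat.card {y : Q // y ^ n = 1} :=
  Nat.card_congr (e.toEquiv.subtypeEquiv fun x => by
    show x ^ n = 1 ↔ (e x) ^ n = 1
    rw [← map_pow]
    exact ⟨fun h => by rw [h, map_one], fun h => e.injective (by rw [h, map_one])⟩)

lemma Tcard_pi {ι : Type} [Fintype ι] (G : ι → Type) [∀ i, Group (G i)] (n : ℕ) :
    Nat.card {x : ∀ i, G i // x ^ n = 1} = ∏ i, Nat.card {y : G i // y ^ n = 1} := by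
  rw [← Nat.card_pi]
  exact Nat.card_congr
    { toFun := fun x i => ⟨x.1 i, congrFun x.2 i⟩
      invFun := fun y => ⟨fun i => (y i).1, funext fun i => (y i).2⟩
      left_inv := fun x => Subtype.ext rfl
      right_inv := fun y => funext fun i => Subtype.ext rfl }

lemma Tcard_mult_zmod (m n : ℕ) :
    Nat.card {y : Multiplicative (ZMod m) // y ^ n = 1} =
      Nat.card {z : ZMod m // n • z = 0} :=
  Nat.card_congr (Multiplicative.toAdd.subtypeEquiv fun y => by
    constructor
    · intro h
      rw [← toAdd_pow, h]; rfl
    · intro h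
      have : Multiplicative.toAdd (y ^ n) = Multiplicative.toAdd (1 : Multiplicative (ZMod m)) := by
        rw [toAdd_pow, h]; rfl
      exact Multiplicative.toAdd.injective this)

lemma Tcard_cyclic_fin {G : Type} [Group G] (h : IsCyclic G) (hm : Nat.card G ≠ 0) (n : ℕ) :
    Nat.card {x : G // x ^ n = 1} = Nat.gcd (Nat.card G) n := by
  rw [Tcard_congr (zmodCyclicMulEquiv h).symm n, Tcard_mult_zmod]
  exact zmod_count _ n hm

lemma Tcard_cyclic_inf {G : Type} [Group G] (h : IsCyclic G) (hm : Nat.card G = 0) {n : ℕ}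
    (hn : n ≠ 0) : Nat.card {x : G // x ^ n = 1} = 1 := by
  rw [Tcard_congr (zmodCyclicMulEquiv h).symm n, Tcard_mult_zmod]
  rw [hm] at *
  exact int_count hn

end TorsionCount

section HomCount

lemma Hom_congr {P Q A : Type} [Group P] [Group Q] [CommGroup A] (e : P ≃* Q) :
    Nat.card (P →* A) = Nat.card (Q →* A) :=
  Nat.card_congr
    { toFun := fun f => f.comp e.symm.toMonoidHom
      invFun := fun g => g.comp e.toMonoidHom
      left_inv := fun f => by ext x; simp
      right_inv := fun g => by ext x; simp }

lemma Hom_pi {ι : Type} [Fintype ι] (G : ι → Type) [∀ i, Group (G i)]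
    (hc : ∀ i, IsCyclic (G i)) (A : Type) [CommGroup A] :
    Nat.card ((∀ i, G i) →* A) = ∏ i, Nat.card (G i →* A) := by
  letI : ∀ i, CommGroup (G i) := fun i => @IsCyclic.commGroup _ _ (hc i)
  classical
  exact (Nat.card_congr (Pi.monoidHomMulEquiv G A).toEquiv).trans Nat.card_pi

lemma Hom_cyclic {G : Type} [Group G] (h : IsCyclic G) (q : ℕ) (hq : q ≠ 0) :
    Nat.card (G →* Multiplicative (ZMod q)) = Nat.gcd q (Nat.card G) := by
  set m := Nat.card G
  set A := Multiplicative (ZMod q)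
  rw [Hom_congr (zmodCyclicMulEquiv h).symm]
  have e1 : (Multiplicative (ZMod m) →* A) ≃ (ZMod m →+ Additive A) :=
    MonoidHom.toAdditiveRight
  have e2 : (ZMod m →+ Additive A) ≃ (ZMod m →+ ZMod q) :=
    { toFun := fun f => (AddEquiv.additiveMultiplicative (ZMod q)).toAddMonoidHom.comp f
      invFun := fun g => (AddEquiv.additiveMultiplicative (ZMod q)).symm.toAddMonoidHom.comp g
      left_inv := fun f => by ext x; simp
      right_inv := fun g => by ext x; simp }
  have e3 : (ZMod m →+ ZMod q) ≃ {f : ℤ →+ ZMod q // f (m : ℤ) = 0} := (ZMod.lift m).symm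
  have e4 : {f : ℤ →+ ZMod q // f (m : ℤ) = 0} ≃ {b : ZMod q // m • b = 0} :=
    ((zmultiplesHom (ZMod q)).subtypeEquiv fun b => by
      show m • b = 0 ↔ ((zmultiplesHom (ZMod q)) b) (m : ℤ) = 0
      rw [zmultiplesHom_apply, natCast_zsmul]).symm
  rw [Nat.card_congr (((e1.trans e2).trans e3).trans e4)]
  exact zmod_count q m hq

end HomCount


section KS

lemma DICyclic.okCard {G : Type} [Group G] [Nontrivial G] (h : DICyclic G) :
    OkCard (Nat.card G) := by
  rcases h.2 with h1 | ⟨p, n, hp, hpn⟩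
  · exact Or.inl Nat.card_eq_zero_of_infinite
  · rcases Nat.eq_zero_or_pos n with rfl | hn
    · rw [pow_zero] at hpn
      have := (Nat.card_eq_one_iff_unique.mp hpn).1
      exact absurd this (not_subsingleton G)
    · exact Or.inr ⟨p, n, hp, hn, hpn⟩

theorem KS {ι κ : Type} [Fintype ι] [Fintype κ] (G : ι → Type) (H : κ → Type)
    [∀ i, Group (G i)] [∀ j, Group (H j)] [∀ i, Nontrivial (G i)] [∀ j, Nontrivial (H j)]
    (hG : ∀ i, DICyclic (G i)) (hH : ∀ j, DICyclic (H j))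
    (e : (∀ i, G i) ≃* (∀ j, H j)) :
    ∃ f : ι ≃ κ, ∀ i, Nonempty (G i ≃* H (f i)) := by
  classical
  set c : ι → ℕ := fun i => Nat.card (G i) with hc
  set d : κ → ℕ := fun j => Nat.card (H j) with hd
  have hT : ∀ p k : ℕ, p.Prime → 1 ≤ k →
      ∏ i, (if c i = 0 then 1 else Nat.gcd (c i) (p ^ k)) =
      ∏ j, (if d j = 0 then 1 else Nat.gcd (d j) (p ^ k)) := by
    intro p k hp _
    have hpk : p ^ k ≠ 0 := pow_ne_zero _ hp.pos.ne'
    have h1 : ∏ i, (if c i = 0 then 1 else Nat.gcd (c i) (p ^ k)) =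
        Nat.card {x : ∀ i, G i // x ^ (p ^ k) = 1} := by
      rw [Tcard_pi]
      refine Finset.prod_congr rfl fun i _ => ?_
      by_cases h0 : c i = 0
      · rw [if_pos h0, Tcard_cyclic_inf (hG i).1 h0 hpk]
      · rw [if_neg h0, Tcard_cyclic_fin (hG i).1 h0]
    have h2 : ∏ j, (if d j = 0 then 1 else Nat.gcd (d j) (p ^ k)) =
        Nat.card {x : ∀ j, H j // x ^ (p ^ k) = 1} := by
      rw [Tcard_pi]
      refine Finset.prod_congr rfl fun j _ => ?_
      by_cases h0 : d j = 0
      · rw [if_pos h0, Tcard_cyclic_inf (hH j).1 h0 hpk]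
      · rw [if_neg h0, Tcard_cyclic_fin (hH j).1 h0]
    rw [h1, h2, Tcard_congr e]
  have hHom : ∀ q : ℕ, q.Prime → ∏ i, Nat.gcd q (c i) = ∏ j, Nat.gcd q (d j) := by
    intro q hq
    have h1 : ∏ i, Nat.gcd q (c i) =
        Nat.card ((∀ i, G i) →* Multiplicative (ZMod q)) := by
      rw [Hom_pi G (fun i => (hG i).1)]
      exact (Finset.prod_congr rfl fun i _ => (Hom_cyclic (hG i).1 q hq.pos.ne').symm)
    have h2 : ∏ j, Nat.gcd q (d j) =
        Nat.card ((∀ j, H j) →* Multiplicative (ZMod q)) := by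
      rw [Hom_pi H (fun j => (hH j).1)]
      exact (Finset.prod_congr rfl fun j _ => (Hom_cyclic (hH j).1 q hq.pos.ne').symm)
    rw [h1, h2, Hom_congr e]
  have harith := arith_count c d (fun i => (hG i).okCard) (fun j => (hH j).okCard) hT hHom
  have hcard : ∀ N, Fintype.card {i // c i = N} = Fintype.card {j // d j = N} := by
    intro N
    rw [Fintype.card_subtype, Fintype.card_subtype]
    exact harith N
  let eN : ∀ N, {i // c i = N} ≃ {j // d j = N} := fun N => Fintype.equivOfCardEq (hcard N)
  refine ⟨(Equiv.sigmaFiberEquiv c).symm.trans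
    ((Equiv.sigmaCongrRight eN).trans (Equiv.sigmaFiberEquiv d)), fun i => ?_⟩
  have hdf : d ((eN (c i) ⟨i, rfl⟩).1) = c i := (eN (c i) ⟨i, rfl⟩).2
  have hfi : ((Equiv.sigmaFiberEquiv c).symm.trans
      ((Equiv.sigmaCongrRight eN).trans (Equiv.sigmaFiberEquiv d))) i
      = (eN (c i) ⟨i, rfl⟩).1 := rfl
  rw [hfi]
  letI : IsCyclic (G i) := (hG i).1
  letI : IsCyclic (H ((eN (c i) ⟨i, rfl⟩)).1) := (hH _).1
  exact ⟨mulEquivOfCyclicCardEq hdf.symm⟩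

end KS


section GraphLemmas

variable {V W : Type} [Fintype V] (Γ : SimpleGraph V) (Δ : SimpleGraph W)

lemma exists_max_clique {s : Set V} (hs : Γ.IsClique s) :
    ∃ t, s ⊆ t ∧ Maximal Γ.IsClique t := by
  obtain ⟨t, ht, hmax⟩ := Set.Finite.exists_maximalFor id
    {t : Set V | Γ.IsClique t ∧ s ⊆ t} (Set.toFinite _) ⟨s, hs, subset_rfl⟩
  exact ⟨t, ht.2, ht.1, fun y hy hty => hmax ⟨hy, ht.2.trans hty⟩ hty⟩

lemma adj_of_t0 (u v : V) :
    (T0Q Γ).Adj (Quotient.mk (simSetoid Γ) u) (Quotient.mk (simSetoid Γ) v) ↔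
      (Quotient.mk (simSetoid Γ) u ≠ Quotient.mk (simSetoid Γ) v ∧ Γ.Adj u v) := by
  constructor
  · rintro ⟨hne, u', v', hu', hv', hadj⟩
    have hclique : Γ.IsClique {u', v'} := by
      rw [SimpleGraph.isClique_pair]
      exact fun _ => hadj
    obtain ⟨t, hsub, hmax⟩ := exists_max_clique Γ hclique
    have hu't : u' ∈ t := hsub (by simp)
    have hv't : v' ∈ t := hsub (by simp)
    have hru : ∀ s : Set V, Maximal Γ.IsClique s → (u' ∈ s ↔ u ∈ s) :=
      Quotient.exact hu'
    have hrv : ∀ s : Set V, Maximal Γ.IsClique s → (v' ∈ s ↔ v ∈ s) :=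
      Quotient.exact hv'
    have hut : u ∈ t := (hru t hmax).mp hu't
    have hvt : v ∈ t := (hrv t hmax).mp hv't
    have huv : u ≠ v := by
      rintro rfl
      exact hne rfl
    exact ⟨hne, hmax.1 hut hvt huv⟩
  · rintro ⟨hne, hadj⟩
    exact ⟨hne, u, v, rfl, rfl, hadj⟩

lemma adj_iff (u v : V) :
    Γ.Adj u v ↔ u ≠ v ∧ (Quotient.mk (simSetoid Γ) u = Quotient.mk (simSetoid Γ) v ∨
      (T0Q Γ).Adj (Quotient.mk (simSetoid Γ) u) (Quotient.mk (simSetoid Γ) v)) := by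
  constructor
  · intro hadj
    refine ⟨hadj.ne, ?_⟩
    by_cases h : Quotient.mk (simSetoid Γ) u = Quotient.mk (simSetoid Γ) v
    · exact Or.inl h
    · exact Or.inr ⟨h, u, v, rfl, rfl, hadj⟩
  · rintro ⟨hne, h | h⟩
    · have hr : ∀ s : Set V, Maximal Γ.IsClique s → (u ∈ s ↔ v ∈ s) := Quotient.exact h
      obtain ⟨t, hsub, hmax⟩ := exists_max_clique Γ (Γ.isClique_singleton u)
      have hut : u ∈ t := hsub rfl
      have hvt : v ∈ t := (hr t hmax).mp hut
      exact hmax.1 hut hvt hne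
    · exact ((adj_of_t0 Γ u v).mp h).2

lemma clique_pullback (f : V ≃ W) (hadj : ∀ u v : V, Γ.Adj u v ↔ Δ.Adj (f u) (f v))
    {s : Set W} (hs : Maximal Δ.IsClique s) : Maximal Γ.IsClique (f ⁻¹' s) := by
  constructor
  · intro x hx y hy hne
    exact (hadj x y).mpr (hs.1 hx hy (fun h => hne (f.injective h)))
  · intro t ht hsub
    have himg : Δ.IsClique (f '' t) := by
      rintro _ ⟨a, ha, rfl⟩ _ ⟨b, hb, rfl⟩ hne
      exact (hadj a b).mp (ht ha hb (fun h => hne (congrArg f h)))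
    have hssub : s ⊆ f '' t := by
      intro w hw
      refine ⟨f.symm w, hsub (by simp [Set.mem_preimage, hw]), by simp⟩
    have himgsub : f '' t ⊆ s := hs.2 himg hssub
    intro x hx
    exact himgsub ⟨x, hx, rfl⟩

lemma sim_transfer [Fintype W] (f : V ≃ W) (hadj : ∀ u v : V, Γ.Adj u v ↔ Δ.Adj (f u) (f v))
    (u v : V) : (simSetoid Γ) u v ↔ (simSetoid Δ) (f u) (f v) := by
  have hadj' : ∀ a b : W, Δ.Adj a b ↔ Γ.Adj (f.symm a) (f.symm b) := by
    intro a b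
    rw [hadj (f.symm a) (f.symm b)]
    simp
  constructor
  · intro h s hs
    have := h (f ⁻¹' s) (clique_pullback Γ Δ f hadj hs)
    simpa using this
  · intro h s hs
    have := h ((f.symm) ⁻¹' s) (clique_pullback Δ Γ f.symm hadj' hs)
    simpa using this

end GraphLemmas


/-- Reindexing a dependent product of groups along an equivalence of index types. -/
def piCongrLeftMul {α β : Type} (e : α ≃ β) (B : β → Type) [∀ b, Group (B b)] :
    (∀ b, B b) ≃* (∀ a, B (e a)) :=
  { (Equiv.piCongrLeft' B e.symm : (∀ b, B b) ≃ (∀ a, B (e.symm.symm a))) with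
    map_mul' := fun _ _ => rfl }

/-- Two labeled-graphs with directly-indecomposable cyclic vertex groups are
isomorphic iff their `T₀`-quotients are isomorphic. -/
theorem labIso_iff_t0_quotients_labIso
    {V W : Type} [Fintype V] [Nonempty V] [Fintype W] [Nonempty W]
    (Γ : SimpleGraph V) (Δ : SimpleGraph W)
    (G : V → Type) (H : W → Type) [∀ v, Group (G v)] [∀ w, Group (H w)]
    [∀ v, Nontrivial (G v)] [∀ w, Nontrivial (H w)]
    (hG : ∀ v, DICyclic (G v)) (hH : ∀ w, DICyclic (H w)) :
    IsLabIso Γ Δ G H ↔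
      IsLabIso (T0Q Γ) (T0Q Δ) (classGroup Γ G) (classGroup Δ H) := by
  classical
  constructor
  · rintro ⟨f, hadj, hgrp⟩
    have hsim := sim_transfer Γ Δ f hadj
    have hFmk : ∀ v : V, Quotient.congr f hsim (Quotient.mk (simSetoid Γ) v) =
        Quotient.mk (simSetoid Δ) (f v) := fun v => rfl
    refine ⟨Quotient.congr f hsim, ?_, ?_⟩
    · intro a b
      obtain ⟨u⟩ := a
      obtain ⟨v⟩ := b
      show (T0Q Γ).Adj (Quotient.mk (simSetoid Γ) u) (Quotient.mk (simSetoid Γ) v) ↔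
        (T0Q Δ).Adj (Quotient.congr f hsim (Quotient.mk (simSetoid Γ) u))
          (Quotient.congr f hsim (Quotient.mk (simSetoid Γ) v))
      rw [hFmk u, hFmk v, adj_of_t0 Γ u v, adj_of_t0 Δ (f u) (f v)]
      constructor
      · rintro ⟨hne, hadj'⟩
        refine ⟨fun h => hne (Quotient.sound ((hsim u v).mpr (Quotient.exact h))), 
          (hadj u v).mp hadj'⟩
      · rintro ⟨hne, hadj'⟩
        refine ⟨fun h => hne (Quotient.sound ((hsim u v).mp (Quotient.exact h))), 
          (hadj u v).mpr hadj'⟩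
    · intro a
      refine ⟨(MulEquiv.piCongrRight (fun x => (hgrp x.1).some)).trans
        (piCongrLeftMul (f.subtypeEquiv (fun v => ?_))
          (fun w : {w : W // Quotient.mk (simSetoid Δ) w = Quotient.congr f hsim a} =>
            H w.1)).symm⟩
      constructor
      · rintro rfl
        exact (hFmk v).symm
      · intro h
        refine (Quotient.congr f hsim).injective ?_
        rw [hFmk v, h]
  · rintro ⟨F, hadjF, hgrpF⟩
    have KSall : ∀ a : Quotient (simSetoid Γ),
        ∃ ea : {v : V // Quotient.mk (simSetoid Γ) v = a} ≃
            {w : W // Quotient.mk (simSetoid Δ) w = F a},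
          ∀ x, Nonempty (G x.1 ≃* H ((ea x).1)) := fun a =>
      KS (fun x : {v : V // Quotient.mk (simSetoid Γ) v = a} => G x.1)
        (fun y : {w : W // Quotient.mk (simSetoid Δ) w = F a} => H y.1)
        (fun x => hG x.1) (fun y => hH y.1) (hgrpF a).some
    choose ea hga using KSall
    let f : V ≃ W := (Equiv.sigmaFiberEquiv (Quotient.mk (simSetoid Γ))).symm.trans
      ((Equiv.sigmaCongr F ea).trans (Equiv.sigmaFiberEquiv (Quotient.mk (simSetoid Δ))))
    have hfv : ∀ v : V, f v = (ea (Quotient.mk (simSetoid Γ) v) ⟨v, rfl⟩).1 :=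
      fun v => rfl
    have hclass : ∀ v : V, Quotient.mk (simSetoid Δ) (f v) = F (Quotient.mk (simSetoid Γ) v) := by
      intro v
      rw [hfv v]
      exact (ea _ ⟨v, rfl⟩).2
    refine ⟨f, ?_, ?_⟩
    · intro u v
      have h1 : f u ≠ f v ↔ u ≠ v := f.injective.ne_iff
      have h2 : (Quotient.mk (simSetoid Γ) u = Quotient.mk (simSetoid Γ) v) ↔
          (Quotient.mk (simSetoid Δ) (f u) = Quotient.mk (simSetoid Δ) (f v)) := by
        rw [hclass u, hclass v]
        exact (Equiv.apply_eq_iff_eq F).symm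
      have h3 : (T0Q Γ).Adj (Quotient.mk (simSetoid Γ) u) (Quotient.mk (simSetoid Γ) v) ↔
          (T0Q Δ).Adj (Quotient.mk (simSetoid Δ) (f u)) (Quotient.mk (simSetoid Δ) (f v)) := by
        rw [hclass u, hclass v]
        exact hadjF _ _
      rw [adj_iff Γ u v, adj_iff Δ (f u) (f v)]
      tauto
    · intro u
      have := hga (Quotient.mk (simSetoid Γ) u) ⟨u, rfl⟩
      rw [hfv u]
      exact this
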